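/- Let n ≥ 1, let ρ_i be a d_i-dimensional quantum state for each i ∈ Fin n, let ϱ be the product state on K = Π i, Fin (d i), and let X be a Hermitian matrix on K with Efron–Stein decomposition X = ∑_{J ⊆ Fin n} X^{=J}. Then Var_ϱ[X] = ∑_{J ⊆ Fin n, J ≠ ∅} Re(Tr[ϱ·(X^{=J})²]). -/

import Mathlib

open scoped BigOperators ComplexOrder

noncomputable section

/-- A `d`-dimensional quantum state: positive semidefinite with trace 1. -/
def IsState {d : ℕ} (ρ : Matrix (Fin d) (Fin d) ℂ) : Prop :=
  ρ.PosSemidef ∧ ρ.trace = 1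

/-- The product state `ρ₁ ⊗ ⋯ ⊗ ρ_n` on `K = Π i, Fin (dim i)`. -/
def prodState {n : ℕ} {dim : Fin n → ℕ}
    (ρ : ∀ i, Matrix (Fin (dim i)) (Fin (dim i)) ℂ) :
    Matrix (∀ j, Fin (dim j)) (∀ j, Fin (dim j)) ℂ :=
  fun a b => ∏ i, ρ i (a i) (b i)

/-- Variance of the observable `X` in the state `ϱ`. -/
def qVar {K : Type*} [Fintype K] (ϱ X : Matrix K K ℂ) : ℝ :=
  ((ϱ * (X * X)).trace).re - (((ϱ * X).trace).re) ^ 2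

/-- Marginalization of the `i`-th component: `E_i X = Tr_i[ρ_i X] ⊗ Id_i`. -/
def Emap {n : ℕ} {dim : Fin n → ℕ}
    (ρ : ∀ i, Matrix (Fin (dim i)) (Fin (dim i)) ℂ) (i : Fin n)
    (X : Matrix (∀ j, Fin (dim j)) (∀ j, Fin (dim j)) ℂ) :
    Matrix (∀ j, Fin (dim j)) (∀ j, Fin (dim j)) ℂ :=
  fun a b =>
    if a i = b i then
      ∑ e, ∑ c, ρ i e c * X (Function.update a i c) (Function.update b i e)
    else 0

/-- The product `∏_{i ∈ S} E_i` (the maps `E_i` commute, so applying them in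
increasing order of the indices realizes this product). -/
def EProd {n : ℕ} {dim : Fin n → ℕ}
    (ρ : ∀ i, Matrix (Fin (dim i)) (Fin (dim i)) ℂ) (S : Finset (Fin n))
    (X : Matrix (∀ j, Fin (dim j)) (∀ j, Fin (dim j)) ℂ) :
    Matrix (∀ j, Fin (dim j)) (∀ j, Fin (dim j)) ℂ :=
  (S.sort (· ≤ ·)).foldr (fun i Y => Emap ρ i Y) X

/-- The Efron–Stein part `X^{=J} = ∑_{I ⊆ J} (-1)^{|J| - |I|} (∏_{i ∉ I} E_i) X`. -/
def ESpart {n : ℕ} {dim : Fin n → ℕ}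
    (ρ : ∀ i, Matrix (Fin (dim i)) (Fin (dim i)) ℂ)
    (X : Matrix (∀ j, Fin (dim j)) (∀ j, Fin (dim j)) ℂ)
    (J : Finset (Fin n)) :
    Matrix (∀ j, Fin (dim j)) (∀ j, Fin (dim j)) ℂ :=
  ∑ I ∈ J.powerset, ((-1 : ℂ) ^ (J.card - I.card)) • EProd ρ Iᶜ X

section Lemmas

variable {n : ℕ} {dim : Fin n → ℕ}
  (ρ : ∀ i, Matrix (Fin (dim i)) (Fin (dim i)) ℂ)

abbrev Kt (dim : Fin n → ℕ) := ∀ j, Fin (dim j)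

theorem Emap_add (i : Fin n) (A B : Matrix (Kt dim) (Kt dim) ℂ) :
    Emap ρ i (A + B) = Emap ρ i A + Emap ρ i B := by
  ext a b
  simp only [Emap, Matrix.add_apply]
  split
  · rw [← Finset.sum_add_distrib]
    congr 1; ext e
    rw [← Finset.sum_add_distrib]
    congr 1; ext c
    ring
  · simp

theorem Emap_smul (i : Fin n) (z : ℂ) (A : Matrix (Kt dim) (Kt dim) ℂ) :
    Emap ρ i (z • A) = z • Emap ρ i A := by
  ext a b
  simp only [Emap, Matrix.smul_apply, smul_eq_mul]
  split
  · rw [Finset.mul_sum]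
    congr 1; ext e
    rw [Finset.mul_sum]
    congr 1; ext c
    ring
  · simp

theorem Emap_sum {α : Type*} (i : Fin n) (s : Finset α)
    (f : α → Matrix (Kt dim) (Kt dim) ℂ) :
    Emap ρ i (∑ x ∈ s, f x) = ∑ x ∈ s, Emap ρ i (f x) := by
  classical
  induction s using Finset.induction with
  | empty =>
    ext a b; simp [Emap]
  | insert _ _ hx ih =>
    rw [Finset.sum_insert hx, Finset.sum_insert hx, Emap_add, ih]

theorem sum4 {M : Type*} [AddCommMonoid M] {ι₁ ι₂ ι₃ ι₄ : Type*}
    [Fintype ι₁] [Fintype ι₂] [Fintype ι₃] [Fintype ι₄]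
    (F : ι₁ → ι₂ → ι₃ → ι₄ → M) :
    ∑ a, ∑ b, ∑ c, ∑ d, F a b c d = ∑ c, ∑ d, ∑ a, ∑ b, F a b c d := by
  trans ∑ a, ∑ c, ∑ d, ∑ b, F a b c d
  · refine Finset.sum_congr rfl fun a _ => ?_
    rw [Finset.sum_comm]
    refine Finset.sum_congr rfl fun c _ => ?_
    rw [Finset.sum_comm]
  · rw [Finset.sum_comm]
    refine Finset.sum_congr rfl fun c _ => ?_
    rw [Finset.sum_comm]

theorem Emap_comm (i j : Fin n) (A : Matrix (Kt dim) (Kt dim) ℂ) :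
    Emap ρ i (Emap ρ j A) = Emap ρ j (Emap ρ i A) := by
  rcases eq_or_ne i j with rfl | hij
  · rfl
  ext a b
  simp only [Emap, Function.update_of_ne hij, Function.update_of_ne hij.symm]
  rcases eq_or_ne (a i) (b i) with hi | hi <;>
    rcases eq_or_ne (a j) (b j) with hj | hj <;>
    simp [hi, hj, Finset.mul_sum]
  rw [sum4]
  refine Finset.sum_congr rfl fun e' _ => ?_
  refine Finset.sum_congr rfl fun c' _ => ?_
  refine Finset.sum_congr rfl fun e _ => ?_
  refine Finset.sum_congr rfl fun c _ => ?_
  rw [Function.update_comm hij, Function.update_comm hij]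
  ring

theorem Emap_idem (i : Fin n) (h : (ρ i).trace = 1)
    (A : Matrix (Kt dim) (Kt dim) ℂ) :
    Emap ρ i (Emap ρ i A) = Emap ρ i A := by
  ext a b
  simp only [Emap, Function.update_self]
  split
  case isFalse => rfl
  case isTrue hab =>
    have : ∀ e c : Fin (dim i),
        (if c = e then
          ∑ e', ∑ c', ρ i e' c' *
            A (Function.update (Function.update a i c) i c')
              (Function.update (Function.update b i e) i e') else 0)
        = (if c = e then
            ∑ e', ∑ c', ρ i e' c' *
              A (Function.update a i c') (Function.update b i e') else 0) := by
      intro e c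
      split
      · simp [Function.update_idem]
      · rfl
    calc ∑ e, ∑ c, ρ i e c * (if c = e then
          ∑ e', ∑ c', ρ i e' c' *
            A (Function.update (Function.update a i c) i c')
              (Function.update (Function.update b i e) i e') else 0)
        = ∑ e, ∑ c, ρ i e c * (if c = e then
            ∑ e', ∑ c', ρ i e' c' *
              A (Function.update a i c') (Function.update b i e') else 0) := by
          refine Finset.sum_congr rfl fun e _ => ?_
          refine Finset.sum_congr rfl fun c _ => ?_
          rw [this]
      _ = ∑ e, ρ i e e * (∑ e', ∑ c', ρ i e' c' *
              A (Function.update a i c') (Function.update b i e')) := by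
          refine Finset.sum_congr rfl fun e _ => ?_
          rw [Finset.sum_eq_single e]
          · simp
          · intro c _ hc; simp [hc]
          · intro habs; exact absurd (Finset.mem_univ e) habs
      _ = _ := by
          rw [← Finset.sum_mul]
          have h' : ∑ e, ρ i e e = 1 := by
            simpa [Matrix.trace, Matrix.diag] using h
          rw [h', one_mul]

theorem EProd_empty (X : Matrix (Kt dim) (Kt dim) ℂ) : EProd ρ ∅ X = X := by
  simp [EProd]

instance EmapLC : LeftCommutative (fun (j : Fin n) (Y : Matrix (Kt dim) (Kt dim) ℂ) => Emap ρ j Y) :=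
  ⟨fun a b c => Emap_comm ρ a b c⟩

theorem foldr_sum {α : Type*} (l : List (Fin n)) (s : Finset α)
    (f : α → Matrix (Kt dim) (Kt dim) ℂ) :
    l.foldr (fun i Y => Emap ρ i Y) (∑ x ∈ s, f x)
      = ∑ x ∈ s, l.foldr (fun i Y => Emap ρ i Y) (f x) := by
  induction l with
  | nil => rfl
  | cons j l ih => simp only [List.foldr_cons, ih, Emap_sum]

theorem foldr_smul (l : List (Fin n)) (z : ℂ)
    (A : Matrix (Kt dim) (Kt dim) ℂ) :
    l.foldr (fun i Y => Emap ρ i Y) (z • A)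
      = z • l.foldr (fun i Y => Emap ρ i Y) A := by
  induction l with
  | nil => rfl
  | cons j l ih => simp only [List.foldr_cons, ih, Emap_smul]

theorem EProd_insert {i : Fin n} {S : Finset (Fin n)} (h : i ∉ S)
    (X : Matrix (Kt dim) (Kt dim) ℂ) :
    EProd ρ (insert i S) X = Emap ρ i (EProd ρ S X) := by
  have hperm : ((insert i S).sort (· ≤ ·)).Perm (i :: S.sort (· ≤ ·)) := by
    rw [← Multiset.coe_eq_coe]
    show ((insert i S).sort (· ≤ ·) : Multiset (Fin n)) = _
    rw [Finset.sort_eq]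
    show (insert i S).val = i ::ₘ (S.sort (· ≤ ·) : Multiset (Fin n))
    rw [Finset.sort_eq, Finset.insert_val, Multiset.ndinsert_of_notMem h]
  rw [EProd, hperm.foldr_eq]
  rfl

theorem Emap_EProd (i : Fin n) (S : Finset (Fin n))
    (X : Matrix (Kt dim) (Kt dim) ℂ) :
    Emap ρ i (EProd ρ S X) = EProd ρ S (Emap ρ i X) := by
  rw [EProd, EProd]
  generalize (S.sort (· ≤ ·)) = l
  induction l with
  | nil => rfl
  | cons j l ih => simp only [List.foldr_cons, Emap_comm ρ i j, ih]

theorem EProd_fix {i : Fin n} {S : Finset (Fin n)} (h : i ∈ S)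
    (htr : (ρ i).trace = 1) (X : Matrix (Kt dim) (Kt dim) ℂ) :
    Emap ρ i (EProd ρ S X) = EProd ρ S X := by
  have : S = insert i (S.erase i) := (Finset.insert_erase h).symm
  rw [this, EProd_insert ρ (Finset.notMem_erase i S), Emap_idem ρ i htr]

theorem EProd_sum {α : Type*} (S : Finset (Fin n)) (s : Finset α)
    (f : α → Matrix (Kt dim) (Kt dim) ℂ) :
    EProd ρ S (∑ x ∈ s, f x) = ∑ x ∈ s, EProd ρ S (f x) :=
  foldr_sum ρ _ s f

theorem EProd_smul (S : Finset (Fin n)) (z : ℂ)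
    (A : Matrix (Kt dim) (Kt dim) ℂ) :
    EProd ρ S (z • A) = z • EProd ρ S A :=
  foldr_smul ρ _ z A

theorem trace_form (N : Matrix (Kt dim) (Kt dim) ℂ) :
    (prodState ρ * N).trace = ∑ a, ∑ b, prodState ρ a b * N b a := by
  simp [Matrix.trace, Matrix.diag, Matrix.mul_apply]

theorem prodState_split (i : Fin n) (a b : Kt dim) :
    prodState ρ a b = ρ i (a i) (b i) * ∏ j ∈ Finset.univ.erase i, ρ j (a j) (b j) := by
  rw [prodState, ← Finset.mul_prod_erase Finset.univ _ (Finset.mem_univ i)]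

theorem trace_Emap (i : Fin n) (h : (ρ i).trace = 1)
    (M : Matrix (Kt dim) (Kt dim) ℂ) :
    (prodState ρ * Emap ρ i M).trace = (prodState ρ * M).trace := by
  classical
  rw [trace_form, trace_form]
  have step1 : ∑ a, ∑ b, prodState ρ a b * Emap ρ i M b a
      = ∑ t : Kt dim × Kt dim × Fin (dim i) × Fin (dim i),
          (if t.2.1 i = t.1 i then
            prodState ρ t.1 t.2.1 * (ρ i t.2.2.1 t.2.2.2 *
              M (Function.update t.2.1 i t.2.2.2) (Function.update t.1 i t.2.2.1))
          else 0) := by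
    rw [Fintype.sum_prod_type]
    refine Finset.sum_congr rfl fun a _ => ?_
    rw [Fintype.sum_prod_type]
    refine Finset.sum_congr rfl fun b _ => ?_
    rw [Fintype.sum_prod_type]
    simp only [Emap]
    split
    case isTrue hba =>
      rw [Finset.mul_sum]
      refine Finset.sum_congr rfl fun e _ => ?_
      rw [Finset.mul_sum]
    case isFalse hba =>
      simp [hba]
  rw [step1]
  -- the involution
  have hinv : Function.Involutive
      (fun t : Kt dim × Kt dim × Fin (dim i) × Fin (dim i) =>
        (Function.update t.1 i t.2.2.1, Function.update t.2.1 i t.2.2.2,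
          t.1 i, t.2.1 i)) := by
    rintro ⟨a, b, e, c⟩
    simp [Function.update_self, Function.update_idem, Function.update_eq_self]
  rw [← Equiv.sum_comp hinv.toPerm]
  have step2 : ∀ t : Kt dim × Kt dim × Fin (dim i) × Fin (dim i),
      (if (Function.update t.2.1 i t.2.2.2) i = (Function.update t.1 i t.2.2.1) i then
        prodState ρ (Function.update t.1 i t.2.2.1) (Function.update t.2.1 i t.2.2.2) *
          (ρ i (t.1 i) (t.2.1 i) *
            M (Function.update (Function.update t.2.1 i t.2.2.2) i (t.2.1 i))
              (Function.update (Function.update t.1 i t.2.2.1) i (t.1 i)))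
      else 0)
      = (if t.2.2.2 = t.2.2.1 then ρ i t.2.2.1 t.2.2.2 else 0) *
          (prodState ρ t.1 t.2.1 * M t.2.1 t.1) := by
    rintro ⟨a, b, e, c⟩
    simp only [Function.update_self, Function.update_idem, Function.update_eq_self]
    split
    · rw [prodState_split ρ i (Function.update a i e) (Function.update b i c),
        Function.update_self, Function.update_self,
        prodState_split ρ i a b]
      have : ∏ j ∈ Finset.univ.erase i, ρ j (Function.update a i e j) (Function.update b i c j)
          = ∏ j ∈ Finset.univ.erase i, ρ j (a j) (b j) := by
        refine Finset.prod_congr rfl fun j hj => ?_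
        rw [Function.update_of_ne (Finset.ne_of_mem_erase hj),
          Function.update_of_ne (Finset.ne_of_mem_erase hj)]
      rw [this]
      ring
    · rw [zero_mul]
  have step3 : (∑ t : Kt dim × Kt dim × Fin (dim i) × Fin (dim i),
      (if t.2.2.2 = t.2.2.1 then ρ i t.2.2.1 t.2.2.2 else 0) *
        (prodState ρ t.1 t.2.1 * M t.2.1 t.1))
      = ∑ a, ∑ b, prodState ρ a b * M b a := by
    rw [Fintype.sum_prod_type]
    have inner : ∀ a : Kt dim, (∑ q : Kt dim × Fin (dim i) × Fin (dim i),
        (if q.2.2 = q.2.1 then ρ i q.2.1 q.2.2 else 0) *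
          (prodState ρ a q.1 * M q.1 a)) = ∑ b, prodState ρ a b * M b a := by
      intro a
      rw [Fintype.sum_prod_type]
      refine Finset.sum_congr rfl fun b _ => ?_
      rw [Fintype.sum_prod_type]
      show (∑ x : Fin (dim i), ∑ y : Fin (dim i),
          (if y = x then ρ i x y else 0) * (prodState ρ a b * M b a))
          = prodState ρ a b * M b a
      trans (∑ x : Fin (dim i), ρ i x x) * (prodState ρ a b * M b a)
      · rw [Finset.sum_mul]
        refine Finset.sum_congr rfl fun x _ => ?_
        rw [Finset.sum_eq_single x]
        · simp
        · intro y _ hy; simp [hy]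
        · intro habs; exact absurd (Finset.mem_univ x) habs
      · have h' : ∑ e, ρ i e e = 1 := by
          simpa [Matrix.trace, Matrix.diag] using h
        rw [h', one_mul]
    exact Finset.sum_congr rfl fun a _ => inner a
  rw [← step3]
  refine Finset.sum_congr rfl fun t _ => ?_
  rw [← step2 t]
  rfl

theorem Emap_fix_zero {i : Fin n} {A : Matrix (Kt dim) (Kt dim) ℂ}
    (hA : Emap ρ i A = A) {a b : Kt dim} (hab : a i ≠ b i) : A a b = 0 := by
  rw [← hA]; simp [Emap, hab]

theorem Emap_fix_update {i : Fin n} {A : Matrix (Kt dim) (Kt dim) ℂ}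
    (hA : Emap ρ i A = A) (a b : Kt dim) (x y : Fin (dim i)) :
    A (Function.update a i x) (Function.update b i x)
      = A (Function.update a i y) (Function.update b i y) := by
  conv_lhs => rw [← hA]
  conv_rhs => rw [← hA]
  simp [Emap, Function.update_idem]

theorem sum_slice (i : Fin n) (x y : Fin (dim i)) (g : Kt dim → ℂ) :
    ∑ k ∈ Finset.univ.filter (fun k => k i = x), g k
      = ∑ k ∈ Finset.univ.filter (fun k => k i = y), g (Function.update k i x) := by
  refine Finset.sum_nbij' (fun k => Function.update k i y)
    (fun k => Function.update k i x) ?_ ?_ ?_ ?_ ?_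
  · intro k _; simp
  · intro k _; simp
  · intro k hk
    simp only [Finset.mem_filter, Finset.mem_univ, true_and] at hk
    simp [Function.update_idem, ← hk]
  · intro k hk
    simp only [Finset.mem_filter, Finset.mem_univ, true_and] at hk
    simp [Function.update_idem, ← hk]
  · intro k hk
    simp only [Finset.mem_filter, Finset.mem_univ, true_and] at hk
    simp [Function.update_idem, ← hk]

theorem Emap_mul_right {i : Fin n} {A : Matrix (Kt dim) (Kt dim) ℂ}
    (hA : Emap ρ i A = A) (B : Matrix (Kt dim) (Kt dim) ℂ) :
    A * Emap ρ i B = Emap ρ i (A * B) := by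
  ext a b
  rw [Matrix.mul_apply]
  by_cases hab : a i = b i
  case neg =>
    rw [show Emap ρ i (A * B) a b = 0 by simp [Emap, hab]]
    refine Finset.sum_eq_zero fun k _ => ?_
    by_cases hk : k i = b i
    · rw [Emap_fix_zero ρ hA (show a i ≠ k i by rw [hk]; exact hab), zero_mul]
    · rw [show Emap ρ i B k b = 0 by simp [Emap, hk], mul_zero]
  case pos =>
    rw [show Emap ρ i (A * B) a b
        = ∑ e, ∑ f, ρ i e f * ∑ k, A (Function.update a i f) k * B k (Function.update b i e) by
      simp [Emap, hab, Matrix.mul_apply]]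
    have inner : ∀ (e f : Fin (dim i)),
        (∑ k, A (Function.update a i f) k * B k (Function.update b i e))
          = ∑ k ∈ Finset.univ.filter (fun k => k i = b i),
              A a k * B (Function.update k i f) (Function.update b i e) := by
      intro e f
      rw [show (∑ k, A (Function.update a i f) k * B k (Function.update b i e))
          = ∑ k ∈ Finset.univ.filter (fun k => k i = f),
              A (Function.update a i f) k * B k (Function.update b i e) by
        rw [Finset.sum_filter_of_ne]
        intro k _ hne
        by_contra hki
        exact hne (by rw [Emap_fix_zero ρ hA
          (show (Function.update a i f) i ≠ k i by
            rw [Function.update_self]; exact fun hh => hki hh.symm), zero_mul])]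
      rw [sum_slice i f (b i)]
      refine Finset.sum_congr rfl fun k hk => ?_
      simp only [Finset.mem_filter, Finset.mem_univ, true_and] at hk
      congr 1
      rw [show A (Function.update a i f) (Function.update k i f)
          = A (Function.update a i (a i)) (Function.update k i (a i)) from
        Emap_fix_update ρ hA a k f (a i)]
      rw [Function.update_eq_self, hab, ← hk, Function.update_eq_self]
    rw [show (∑ e, ∑ f, ρ i e f * ∑ k, A (Function.update a i f) k * B k (Function.update b i e))
        = ∑ e, ∑ f, ∑ k ∈ Finset.univ.filter (fun k => k i = b i),
            ρ i e f * (A a k * B (Function.update k i f) (Function.update b i e)) by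
      refine Finset.sum_congr rfl fun e _ => ?_
      refine Finset.sum_congr rfl fun f _ => ?_
      rw [inner e f, Finset.mul_sum]]
    rw [show (∑ k, A a k * Emap ρ i B k b)
        = ∑ k ∈ Finset.univ.filter (fun k => k i = b i),
            ∑ e, ∑ f, ρ i e f * (A a k * B (Function.update k i f) (Function.update b i e)) by
      rw [← Finset.sum_filter_of_ne (p := fun k => k i = b i) (fun k _ hne => by
        by_contra hki
        exact hne (by rw [show Emap ρ i B k b = 0 by simp [Emap, hki], mul_zero]))]
      refine Finset.sum_congr rfl fun k hk => ?_
      simp only [Finset.mem_filter, Finset.mem_univ, true_and] at hk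
      rw [show Emap ρ i B k b
          = ∑ e, ∑ f, ρ i e f * B (Function.update k i f) (Function.update b i e) by
        simp [Emap, hk]]
      rw [Finset.mul_sum]
      refine Finset.sum_congr rfl fun e _ => ?_
      rw [Finset.mul_sum]
      refine Finset.sum_congr rfl fun f _ => ?_
      ring]
    rw [Finset.sum_comm]
    refine Finset.sum_congr rfl fun e _ => ?_
    rw [Finset.sum_comm]

theorem Emap_mul_left {i : Fin n} {B : Matrix (Kt dim) (Kt dim) ℂ}
    (hB : Emap ρ i B = B) (A : Matrix (Kt dim) (Kt dim) ℂ) :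
    Emap ρ i A * B = Emap ρ i (A * B) := by
  ext a b
  rw [Matrix.mul_apply]
  by_cases hab : a i = b i
  case neg =>
    rw [show Emap ρ i (A * B) a b = 0 by simp [Emap, hab]]
    refine Finset.sum_eq_zero fun k _ => ?_
    by_cases hk : a i = k i
    · rw [Emap_fix_zero ρ hB (show k i ≠ b i by rw [← hk]; exact hab), mul_zero]
    · rw [show Emap ρ i A a k = 0 by simp [Emap, hk], zero_mul]
  case pos =>
    rw [show Emap ρ i (A * B) a b
        = ∑ e, ∑ f, ρ i e f * ∑ k, A (Function.update a i f) k * B k (Function.update b i e) by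
      simp [Emap, hab, Matrix.mul_apply]]
    have inner : ∀ (e f : Fin (dim i)),
        (∑ k, A (Function.update a i f) k * B k (Function.update b i e))
          = ∑ k ∈ Finset.univ.filter (fun k => k i = a i),
              A (Function.update a i f) (Function.update k i e) * B k b := by
      intro e f
      rw [show (∑ k, A (Function.update a i f) k * B k (Function.update b i e))
          = ∑ k ∈ Finset.univ.filter (fun k => k i = e),
              A (Function.update a i f) k * B k (Function.update b i e) by
        rw [Finset.sum_filter_of_ne]
        intro k _ hne
        by_contra hki
        exact hne (by rw [Emap_fix_zero ρ hB
          (show k i ≠ (Function.update b i e) i by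
            rw [Function.update_self]; exact hki), mul_zero])]
      rw [sum_slice i e (a i)]
      refine Finset.sum_congr rfl fun k hk => ?_
      simp only [Finset.mem_filter, Finset.mem_univ, true_and] at hk
      congr 1
      rw [show B (Function.update k i e) (Function.update b i e)
          = B (Function.update k i (b i)) (Function.update b i (b i)) from
        Emap_fix_update ρ hB k b e (b i)]
      rw [Function.update_eq_self, ← hab, ← hk, Function.update_eq_self]
    rw [show (∑ e, ∑ f, ρ i e f * ∑ k, A (Function.update a i f) k * B k (Function.update b i e))
        = ∑ e, ∑ f, ∑ k ∈ Finset.univ.filter (fun k => k i = a i),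
            ρ i e f * (A (Function.update a i f) (Function.update k i e) * B k b) by
      refine Finset.sum_congr rfl fun e _ => ?_
      refine Finset.sum_congr rfl fun f _ => ?_
      rw [inner e f, Finset.mul_sum]]
    rw [show (∑ k, Emap ρ i A a k * B k b)
        = ∑ k ∈ Finset.univ.filter (fun k => k i = a i),
            ∑ e, ∑ f, ρ i e f * (A (Function.update a i f) (Function.update k i e) * B k b) by
      rw [← Finset.sum_filter_of_ne (p := fun k => k i = a i) (fun k _ hne => by
        by_contra hki
        exact hne (by rw [show Emap ρ i A a k = 0 by
          have hki' : ¬ a i = k i := fun h => hki h.symm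
          simp [Emap, hki'], zero_mul]))]
      refine Finset.sum_congr rfl fun k hk => ?_
      simp only [Finset.mem_filter, Finset.mem_univ, true_and] at hk
      rw [show Emap ρ i A a k
          = ∑ e, ∑ f, ρ i e f * A (Function.update a i f) (Function.update k i e) by
        simp [Emap, hk]]
      rw [Finset.sum_mul]
      refine Finset.sum_congr rfl fun e _ => ?_
      rw [Finset.sum_mul]
      refine Finset.sum_congr rfl fun f _ => ?_
      ring]
    rw [Finset.sum_comm]
    refine Finset.sum_congr rfl fun e _ => ?_
    rw [Finset.sum_comm]

theorem Emap_ESpart_not_mem {i : Fin n} {J : Finset (Fin n)} (hi : i ∉ J)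
    (htr : (ρ i).trace = 1) (X : Matrix (Kt dim) (Kt dim) ℂ) :
    Emap ρ i (ESpart ρ X J) = ESpart ρ X J := by
  rw [ESpart, Emap_sum]
  refine Finset.sum_congr rfl fun I hI => ?_
  rw [Emap_smul, EProd_fix ρ (Finset.mem_compl.mpr
    (fun hiI => hi (Finset.mem_powerset.mp hI hiI))) htr]

theorem Emap_ESpart_mem {i : Fin n} {J : Finset (Fin n)} (hi : i ∈ J)
    (htr : (ρ i).trace = 1) (X : Matrix (Kt dim) (Kt dim) ℂ) :
    Emap ρ i (ESpart ρ X J) = 0 := by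
  classical
  rw [ESpart, Emap_sum]
  have hJ : insert i (J.erase i) = J := Finset.insert_erase hi
  rw [← hJ, Finset.powerset_insert, Finset.sum_union]
  · have h2 : ∑ I ∈ Finset.image (insert i) (J.erase i).powerset,
        Emap ρ i (((-1 : ℂ) ^ ((insert i (J.erase i)).card - I.card)) • EProd ρ Iᶜ X)
        = ∑ I ∈ (J.erase i).powerset,
            Emap ρ i (((-1 : ℂ) ^ ((insert i (J.erase i)).card - (insert i I).card)) •
              EProd ρ (insert i I)ᶜ X) := by
      refine Finset.sum_image fun I hI I' hI' hins => ?_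
      have hiI : i ∉ I := fun h =>
        (Finset.notMem_erase i J) (Finset.mem_powerset.mp hI h)
      have hiI' : i ∉ I' := fun h =>
        (Finset.notMem_erase i J) (Finset.mem_powerset.mp hI' h)
      rw [← Finset.erase_insert hiI, ← Finset.erase_insert hiI', hins]
    rw [h2, ← Finset.sum_add_distrib]
    refine Finset.sum_eq_zero fun I hI => ?_
    have hiI : i ∉ I := fun h =>
      (Finset.notMem_erase i J) (Finset.mem_powerset.mp hI h)
    have hicI : i ∈ Iᶜ := Finset.mem_compl.mpr hiI
    have hins : insert i I ⊆ insert i (J.erase i) :=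
      Finset.insert_subset_insert i (Finset.mem_powerset.mp hI)
    -- first summand
    rw [Emap_smul, EProd_fix ρ hicI htr]
    -- second summand
    rw [Emap_smul, Finset.compl_insert,
      show Emap ρ i (EProd ρ (Iᶜ.erase i) X) = EProd ρ (insert i (Iᶜ.erase i)) X from
        (EProd_insert ρ (Finset.notMem_erase i Iᶜ) X).symm,
      Finset.insert_erase hicI]
    rw [← add_smul]
    convert zero_smul ℂ _
    have hcard : I.card < (insert i (J.erase i)).card := by
      rw [Finset.card_insert_of_notMem (Finset.notMem_erase i J)]
      exact Nat.lt_succ_of_le (Finset.card_le_card (Finset.mem_powerset.mp hI))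
    have hcard2 : (insert i I).card = I.card + 1 :=
      Finset.card_insert_of_notMem hiI
    rw [hcard2]
    obtain ⟨m, hm⟩ : ∃ m, (insert i (J.erase i)).card - I.card = m + 1 :=
      ⟨(insert i (J.erase i)).card - I.card - 1, by omega⟩
    rw [hm, show (insert i (J.erase i)).card - (I.card + 1) = m by omega]
    rw [pow_succ]
    ring
  · rw [Finset.disjoint_right]
    rintro I hI hI2
    obtain ⟨I', hI', rfl⟩ := Finset.mem_image.mp hI
    exact (Finset.notMem_erase i J)
      (Finset.mem_powerset.mp hI2 (Finset.mem_insert_self i I'))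

theorem neg_one_pow_powerset_sum (x : Finset (Fin n)) :
    (∑ m ∈ x.powerset, (-1 : ℂ) ^ m.card) = if x = ∅ then 1 else 0 := by
  have := Finset.sum_powerset_neg_one_pow_card (x := x)
  have h2 := congrArg (Int.cast : ℤ → ℂ) this
  push_cast at h2
  rw [h2]

theorem ESpart_sum (X : Matrix (Kt dim) (Kt dim) ℂ) :
    ∑ J : Finset (Fin n), ESpart ρ X J = X := by
  classical
  have expand : ∀ J : Finset (Fin n), ESpart ρ X J
      = ∑ I : Finset (Fin n), (if I ∈ J.powerset then
          ((-1 : ℂ) ^ (J.card - I.card)) • EProd ρ Iᶜ X else 0) := by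
    intro J
    rw [ESpart, Finset.sum_ite_mem, Finset.univ_inter]
  rw [Finset.sum_congr rfl fun J _ => expand J, Finset.sum_comm]
  have inner : ∀ I : Finset (Fin n),
      (∑ J : Finset (Fin n), if I ∈ J.powerset then
          ((-1 : ℂ) ^ (J.card - I.card)) • EProd ρ Iᶜ X else 0)
      = if I = Finset.univ then EProd ρ Iᶜ X else 0 := by
    intro I
    rw [Finset.sum_ite, Finset.sum_const_zero, add_zero]
    have reindex : ∑ J ∈ Finset.univ.filter (fun (J : Finset (Fin n)) => I ∈ J.powerset),
        ((-1 : ℂ) ^ (J.card - I.card)) • EProd ρ Iᶜ X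
        = ∑ K ∈ Iᶜ.powerset, ((-1 : ℂ) ^ K.card) • EProd ρ Iᶜ X := by
      refine Finset.sum_nbij' (fun J => J \ I) (fun K => I ∪ K) ?_ ?_ ?_ ?_ ?_
      · intro J hJ
        simp only [Finset.mem_filter, Finset.mem_univ, true_and,
          Finset.mem_powerset] at hJ ⊢
        intro x hx
        simp only [Finset.mem_sdiff] at hx
        exact Finset.mem_compl.mpr hx.2
      · intro K hK
        simp only [Finset.mem_filter, Finset.mem_univ, true_and,
          Finset.mem_powerset] at hK ⊢
        exact Finset.subset_union_left
      · intro J hJ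
        simp only [Finset.mem_filter, Finset.mem_univ, true_and,
          Finset.mem_powerset] at hJ
        exact Finset.union_sdiff_of_subset hJ
      · intro K hK
        simp only [Finset.mem_powerset] at hK
        refine Finset.union_sdiff_cancel_left ?_
        rw [Finset.disjoint_left]
        intro x hxI hxK
        exact Finset.mem_compl.mp (hK hxK) hxI
      · intro J hJ
        simp only [Finset.mem_filter, Finset.mem_univ, true_and,
          Finset.mem_powerset] at hJ
        rw [Finset.card_sdiff_of_subset hJ]
    rw [reindex, ← Finset.sum_smul, neg_one_pow_powerset_sum]
    by_cases hI : I = Finset.univ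
    · rw [if_pos hI, if_pos (by rw [hI, Finset.compl_univ]), one_smul]
    · rw [if_neg hI, if_neg (fun h => hI (by
        rwa [Finset.compl_eq_empty_iff] at h)), zero_smul]
  rw [Finset.sum_congr rfl fun I _ => inner I, Finset.sum_ite_eq' Finset.univ Finset.univ
    (fun I => EProd ρ Iᶜ X)]
  simp only [Finset.mem_univ, if_pos, Finset.compl_univ]
  exact EProd_empty ρ X

theorem const_of_update (f : Kt dim → ℂ)
    (hf : ∀ (i : Fin n) (a : Kt dim) (x y : Fin (dim i)),
      f (Function.update a i x) = f (Function.update a i y))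
    (a b : Kt dim) : f a = f b := by
  classical
  have key : ∀ S : Finset (Fin n), f (fun j => if j ∈ S then b j else a j) = f a := by
    intro S
    induction S using Finset.induction with
    | empty => simp
    | @insert i S hi ih =>
      have heq : (fun j => if j ∈ insert i S then b j else a j)
          = Function.update (fun j => if j ∈ S then b j else a j) i (b i) := by
        funext j
        by_cases hj : j = i
        · subst hj; simp
        · simp [Function.update_of_ne hj, hj]
      rw [heq, hf i _ (b i) (if i ∈ S then b i else a i)]
      rw [show Function.update (fun j => if j ∈ S then b j else a j) i
            (if i ∈ S then b i else a i) = (fun j => if j ∈ S then b j else a j) from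
        Function.update_eq_self i _]
      exact ih
  have := key Finset.univ
  simp only [Finset.mem_univ, if_true] at this
  exact this.symm

theorem fixed_eq_smul_one {M : Matrix (Kt dim) (Kt dim) ℂ}
    (hM : ∀ i, Emap ρ i M = M) (a₀ : Kt dim) :
    M = (M a₀ a₀) • (1 : Matrix (Kt dim) (Kt dim) ℂ) := by
  ext a b
  by_cases hab : a = b
  · subst hab
    rw [Matrix.smul_apply, Matrix.one_apply_eq, smul_eq_mul, mul_one]
    exact const_of_update (fun v => M v v)
      (fun i c x y => Emap_fix_update ρ (hM i) c c x y) a a₀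
  · obtain ⟨i, hi⟩ : ∃ i, a i ≠ b i := by
      by_contra h; push_neg at h; exact hab (funext h)
    rw [Emap_fix_zero ρ (hM i) hi, Matrix.smul_apply, Matrix.one_apply_ne hab, smul_zero]

theorem prodState_trace (h : ∀ i, (ρ i).trace = 1) : (prodState ρ).trace = 1 := by
  have : (prodState ρ).trace = ∑ a : Kt dim, ∏ i, ρ i (a i) (a i) := by
    simp [Matrix.trace, Matrix.diag, prodState]
  rw [this, ← Fintype.piFinset_univ]
  have hps := Finset.prod_univ_sum (κ := fun i : Fin n => Fin (dim i))
    (t := fun i : Fin n => (Finset.univ : Finset (Fin (dim i))))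
    (f := fun i x => ρ i x x)
  rw [← hps]
  rw [Finset.prod_congr rfl (fun i _ => show (∑ x, ρ i x x) = 1 by
    simpa [Matrix.trace, Matrix.diag] using h i)]
  simp

theorem prodState_herm (h : ∀ i, (ρ i).IsHermitian) : (prodState ρ).IsHermitian := by
  show Matrix.conjTranspose (prodState ρ) = prodState ρ
  ext a b
  simp only [Matrix.conjTranspose_apply, prodState, star_prod]
  refine Finset.prod_congr rfl fun i _ => ?_
  rw [← Matrix.conjTranspose_apply, h i]

theorem trace_EProd (htr : ∀ i, (ρ i).trace = 1) (S : Finset (Fin n))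
    (X : Matrix (Kt dim) (Kt dim) ℂ) :
    (prodState ρ * EProd ρ S X).trace = (prodState ρ * X).trace := by
  rw [EProd]
  induction (S.sort (· ≤ ·)) with
  | nil => rfl
  | cons j l ih => rw [List.foldr_cons, trace_Emap ρ j (htr j), ih]

theorem trace_smul_one (z : ℂ) (htr : ∀ i, (ρ i).trace = 1) :
    (prodState ρ * (z • (1 : Matrix (Kt dim) (Kt dim) ℂ))).trace = z := by
  rw [Matrix.mul_smul, Matrix.mul_one, Matrix.trace_smul, prodState_trace ρ htr,
    smul_eq_mul, mul_one]

end Lemmas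

/-- The variance of an observable is the sum of the weights of the nonempty
Efron–Stein parts. -/
theorem quantum_efron_stein_variance_decomposition (n : ℕ) (hn : 1 ≤ n)
    (dim : Fin n → ℕ)
    (ρ : ∀ i, Matrix (Fin (dim i)) (Fin (dim i)) ℂ)
    (hρ : ∀ i, IsState (ρ i))
    (X : Matrix (∀ j, Fin (dim j)) (∀ j, Fin (dim j)) ℂ) (hX : X.IsHermitian) :
    qVar (prodState ρ) X =
      ∑ J ∈ Finset.univ \ {(∅ : Finset (Fin n))},
        ((prodState ρ * (ESpart ρ X J * ESpart ρ X J)).trace).re := by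
  classical
  have htr : ∀ i, (ρ i).trace = 1 := fun i => (hρ i).2
  have hherm : ∀ i, (ρ i).IsHermitian := fun i => (hρ i).1.1
  have hdim : ∀ i, 0 < dim i := by
    intro i
    by_contra h
    push_neg at h
    have h0 : dim i = 0 := Nat.le_zero.mp h
    have : (ρ i).trace = 0 := by
      rw [Matrix.trace]
      have : (Finset.univ : Finset (Fin (dim i))) = ∅ := by
        rw [Finset.univ_eq_empty_iff]
        rw [h0]; exact Fin.isEmpty'
      rw [this, Finset.sum_empty]
    rw [htr i] at this
    exact one_ne_zero this
  set a₀ : Kt dim := fun j => ⟨0, hdim j⟩ with ha₀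
  -- the trace functional
  let φ : Matrix (Kt dim) (Kt dim) ℂ → ℂ := fun M => (prodState ρ * M).trace
  have hφ : ∀ M, φ M = (prodState ρ * M).trace := fun _ => rfl
  have φsum : ∀ {α : Type} (s : Finset α) (f : α → Matrix (Kt dim) (Kt dim) ℂ),
      φ (∑ x ∈ s, f x) = ∑ x ∈ s, φ (f x) := by
    intro α s f
    simp only [hφ, Matrix.mul_sum, Matrix.trace_sum]
  -- orthogonality
  have orth : ∀ J J' : Finset (Fin n), J ≠ J' →
      φ (ESpart ρ X J * ESpart ρ X J') = 0 := by
    intro J J' hne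
    by_cases hsub : J ⊆ J'
    · have : ¬ J' ⊆ J := fun h => hne (Finset.Subset.antisymm hsub h)
      obtain ⟨i, hiJ', hiJ⟩ := Finset.not_subset.mp this
      have hkill : Emap ρ i (ESpart ρ X J') = 0 := Emap_ESpart_mem ρ hiJ' (htr i) X
      have hfix : Emap ρ i (ESpart ρ X J) = ESpart ρ X J :=
        Emap_ESpart_not_mem ρ hiJ (htr i) X
      have h0 : Emap ρ i (ESpart ρ X J * ESpart ρ X J') = 0 := by
        rw [← Emap_mul_right ρ hfix, hkill, Matrix.mul_zero]
      rw [hφ, ← trace_Emap ρ i (htr i), h0, Matrix.mul_zero, Matrix.trace_zero]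
    · obtain ⟨i, hiJ, hiJ'⟩ := Finset.not_subset.mp hsub
      have hkill : Emap ρ i (ESpart ρ X J) = 0 := Emap_ESpart_mem ρ hiJ (htr i) X
      have hfix : Emap ρ i (ESpart ρ X J') = ESpart ρ X J' :=
        Emap_ESpart_not_mem ρ hiJ' (htr i) X
      have h0 : Emap ρ i (ESpart ρ X J * ESpart ρ X J') = 0 := by
        rw [← Emap_mul_left ρ hfix, hkill, Matrix.zero_mul]
      rw [hφ, ← trace_Emap ρ i (htr i), h0, Matrix.mul_zero, Matrix.trace_zero]
  -- expansion of φ (X * X)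
  have hdecomp : ∑ J : Finset (Fin n), ESpart ρ X J = X := ESpart_sum ρ X
  have expand : φ (X * X) = ∑ J : Finset (Fin n), φ (ESpart ρ X J * ESpart ρ X J) := by
    conv_lhs => rw [← hdecomp]
    rw [Matrix.sum_mul]
    rw [show (∑ J : Finset (Fin n), ESpart ρ X J * ∑ J' : Finset (Fin n), ESpart ρ X J')
        = ∑ J : Finset (Fin n), ∑ J' : Finset (Fin n), ESpart ρ X J * ESpart ρ X J' by
      exact Finset.sum_congr rfl fun J _ => Matrix.mul_sum _ _ _]
    rw [φsum]
    refine Finset.sum_congr rfl fun J _ => ?_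
    rw [φsum]
    rw [Finset.sum_eq_single J]
    · intro J' _ hJ' ; exact orth J J' (fun h => hJ' h.symm)
    · intro h; exact absurd (Finset.mem_univ J) h
  -- the empty part is a scalar
  have hempty : ESpart ρ X ∅ = EProd ρ Finset.univ X := by
    rw [ESpart, Finset.powerset_empty, Finset.sum_singleton]
    simp [Finset.compl_empty]
  have hfixall : ∀ i, Emap ρ i (EProd ρ Finset.univ X) = EProd ρ Finset.univ X :=
    fun i => EProd_fix ρ (Finset.mem_univ i) (htr i) X
  set c : ℂ := (EProd ρ Finset.univ X) a₀ a₀ with hc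
  have hscal : EProd ρ Finset.univ X = c • (1 : Matrix (Kt dim) (Kt dim) ℂ) :=
    fixed_eq_smul_one ρ hfixall a₀
  have hcφ : c = φ X := by
    have h1 : φ (EProd ρ Finset.univ X) = φ X := trace_EProd ρ htr _ X
    have h2 : φ (EProd ρ Finset.univ X) = c := by
      rw [hφ, hscal]; exact trace_smul_one ρ c htr
    rw [← h2, h1]
  have hemptytrace : φ (ESpart ρ X ∅ * ESpart ρ X ∅) = φ X * φ X := by
    rw [hφ, hempty, hscal, smul_mul_smul_comm, Matrix.one_mul]
    rw [show ((prodState ρ * ((c * c) • (1 : Matrix (Kt dim) (Kt dim) ℂ))).trace) = c * c from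
      trace_smul_one ρ (c * c) htr]
    rw [hcφ]
  -- reality of φ X
  have hreal : (φ X).im = 0 := by
    have hϱ : (prodState ρ).IsHermitian := prodState_herm ρ hherm
    have : star (φ X) = φ X := by
      rw [hφ]
      rw [← Matrix.trace_conjTranspose, Matrix.conjTranspose_mul, hX.eq, hϱ.eq,
        Matrix.trace_mul_comm]
    exact Complex.conj_eq_iff_im.mp this
  -- assemble
  have split : ∑ J : Finset (Fin n), φ (ESpart ρ X J * ESpart ρ X J)
      = (∑ J ∈ Finset.univ \ {(∅ : Finset (Fin n))},
          φ (ESpart ρ X J * ESpart ρ X J)) + φ X * φ X := by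
    rw [← Finset.sum_erase_add Finset.univ _ (Finset.mem_univ (∅ : Finset (Fin n))),
      hemptytrace, Finset.erase_eq]
  rw [qVar]
  have : ((prodState ρ * (X * X)).trace) = φ (X * X) := rfl
  rw [this, expand, split]
  have : ((prodState ρ * X).trace) = φ X := rfl
  rw [this]
  rw [Complex.add_re]
  have : (φ X * φ X).re = (φ X).re ^ 2 := by
    rw [Complex.mul_re, hreal]
    ring
  rw [this]
  rw [Complex.re_sum]
  ring
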